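/- Let W be a power bounded operator on a Hilbert space H and let L be a Banach limit on ℓ^∞(ℕ). Then the sesquilinear form [h,g] := L({⟨Wⁿh, Wⁿg⟩}_n) is a bounded positive semidefinite Hermitian form on H satisfying [Wh, Wg] = [h, g] for all h, g ∈ H; consequently W induces a well-defined isometry W₀ on the completion of H/H₀, where H₀ = {h : [h,h] = 0}. -/

import Mathlib

open scoped InnerProductSpace
open BoundedContinuousFunction

/-- For a power bounded operator `W` and a Banach limit `L` on `ℓ^∞(ℕ)`,
the form `[h,g] := L({⟨Wⁿh, Wⁿg⟩}ₙ)` is a bounded positive semidefinite Hermitian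
sesquilinear form with `[Wh, Wg] = [h, g]`; consequently `W` induces a well-defined
isometry on (the completion of) `H/H₀` where `H₀ = {h : [h,h] = 0}`. -/
theorem banach_limit_asymptotic_form
    {H : Type*} [NormedAddCommGroup H] [InnerProductSpace ℂ H] [CompleteSpace H]
    (W : H →L[ℂ] H) (Cpb : ℝ) (hpb : ∀ n : ℕ, ‖W ^ n‖ ≤ Cpb)
    -- a Banach limit on the bounded (real) sequences:
    (L : (ℕ →ᵇ ℝ) →ₗ[ℝ] ℝ)
    (hL1 : L (BoundedContinuousFunction.const ℕ (1 : ℝ)) = 1)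
    (hLpos : ∀ f : ℕ →ᵇ ℝ, (∀ n, 0 ≤ f n) → 0 ≤ L f)
    (hLshift : ∀ f g : ℕ →ᵇ ℝ, (∀ n, g n = f (n + 1)) → L g = L f)
    -- the bounded sequences of real and imaginary parts of ⟨Wⁿh, Wⁿg⟩:
    (seqre seqim : H → H → (ℕ →ᵇ ℝ))
    (hre : ∀ h g n, seqre h g n = (⟪(W ^ n) h, (W ^ n) g⟫_ℂ).re)
    (him : ∀ h g n, seqim h g n = (⟪(W ^ n) h, (W ^ n) g⟫_ℂ).im)
    -- the form [h,g] = L(re) + i L(im):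
    (B : H → H → ℂ)
    (hB : ∀ h g, B h g = (L (seqre h g) : ℂ) + (L (seqim h g) : ℂ) * Complex.I) :
    -- Hermitian:
    (∀ h g, B g h = starRingEnd ℂ (B h g)) ∧
    -- sesquilinear (conjugate-linear in the first variable, linear in the second):
    (∀ h₁ h₂ g, B (h₁ + h₂) g = B h₁ g + B h₂ g) ∧
    (∀ h g₁ g₂, B h (g₁ + g₂) = B h g₁ + B h g₂) ∧
    (∀ (a : ℂ) h g, B (a • h) g = starRingEnd ℂ a * B h g) ∧
    (∀ (a : ℂ) h g, B h (a • g) = a * B h g) ∧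
    -- positive semidefinite:
    (∀ h, (B h h).im = 0 ∧ 0 ≤ (B h h).re) ∧
    -- bounded:
    (∃ C : ℝ, ∀ h g, ‖B h g‖ ≤ C * ‖h‖ * ‖g‖) ∧
    -- invariance, so that W induces a well-defined isometry on the completion of H/H₀:
    (∀ h g, B (W h) (W g) = B h g) ∧
    (∀ h, B h h = 0 → B (W h) (W h) = 0) := by

  -- abbreviations
  have hLabs : ∀ f : ℕ →ᵇ ℝ, |L f| ≤ ‖f‖ := by
    intro f
    have hub : ∀ n, f n ≤ ‖f‖ := fun n =>
      le_trans (le_abs_self _) (f.norm_coe_le_norm n)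
    have hlb : ∀ n, -‖f‖ ≤ f n := fun n =>
      neg_le_of_abs_le (f.norm_coe_le_norm n)
    have hconst : ∀ c : ℝ, L (BoundedContinuousFunction.const ℕ c) = c := by
      intro c
      have : BoundedContinuousFunction.const ℕ c
          = c • BoundedContinuousFunction.const ℕ (1 : ℝ) := by
        ext n; simp
      rw [this, map_smul, hL1, smul_eq_mul, mul_one]
    have h1 : 0 ≤ L (BoundedContinuousFunction.const ℕ ‖f‖ - f) := by
      apply hLpos
      intro n
      simpa using sub_nonneg.mpr (hub n)
    have h2 : 0 ≤ L (f - BoundedContinuousFunction.const ℕ (-‖f‖)) := by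
      apply hLpos
      intro n
      have := hlb n
      simp only [BoundedContinuousFunction.coe_sub, BoundedContinuousFunction.const_apply, Pi.sub_apply]
      linarith
    rw [map_sub, hconst] at h1 h2
    rw [abs_le]; constructor <;> linarith
  -- sequence identities
  have hre_add₁ : ∀ h₁ h₂ g, seqre (h₁ + h₂) g = seqre h₁ g + seqre h₂ g := by
    intro h₁ h₂ g; ext n; simp [hre, inner_add_left]
  have him_add₁ : ∀ h₁ h₂ g, seqim (h₁ + h₂) g = seqim h₁ g + seqim h₂ g := by
    intro h₁ h₂ g; ext n; simp [him, inner_add_left]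
  have hre_add₂ : ∀ h g₁ g₂, seqre h (g₁ + g₂) = seqre h g₁ + seqre h g₂ := by
    intro h g₁ g₂; ext n; simp [hre, inner_add_right]
  have him_add₂ : ∀ h g₁ g₂, seqim h (g₁ + g₂) = seqim h g₁ + seqim h g₂ := by
    intro h g₁ g₂; ext n; simp [him, inner_add_right]
  have hre_smul₁ : ∀ (a : ℂ) h g,
      seqre (a • h) g = a.re • seqre h g + a.im • seqim h g := by
    intro a h g; ext n
    simp [hre, him, inner_smul_left, Complex.mul_re] <;> ring
  have him_smul₁ : ∀ (a : ℂ) h g,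
      seqim (a • h) g = a.re • seqim h g - a.im • seqre h g := by
    intro a h g; ext n
    simp [hre, him, inner_smul_left, Complex.mul_im] <;> ring
  have hre_smul₂ : ∀ (a : ℂ) h g,
      seqre h (a • g) = a.re • seqre h g - a.im • seqim h g := by
    intro a h g; ext n
    simp [hre, him, inner_smul_right, Complex.mul_re] <;> ring
  have him_smul₂ : ∀ (a : ℂ) h g,
      seqim h (a • g) = a.re • seqim h g + a.im • seqre h g := by
    intro a h g; ext n
    simp [hre, him, inner_smul_right, Complex.mul_im] <;> ring
  have hre_symm : ∀ h g, seqre g h = seqre h g := by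
    intro h g; ext n
    rw [hre, hre, ← inner_conj_symm ((W ^ n) g) ((W ^ n) h), Complex.conj_re]
  have him_symm : ∀ h g, seqim g h = -seqim h g := by
    intro h g; ext n
    simp only [BoundedContinuousFunction.coe_neg, Pi.neg_apply]
    rw [him, him, ← inner_conj_symm ((W ^ n) g) ((W ^ n) h), Complex.conj_im]
  have hre_shift : ∀ h g n, seqre (W h) (W g) n = seqre h g (n + 1) := by
    intro h g n
    simp [hre, pow_succ, ContinuousLinearMap.mul_apply]
  have him_shift : ∀ h g n, seqim (W h) (W g) n = seqim h g (n + 1) := by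
    intro h g n
    simp [him, pow_succ, ContinuousLinearMap.mul_apply]
  have hinv : ∀ h g, B (W h) (W g) = B h g := by
    intro h g
    rw [hB, hB, hLshift (seqre h g) (seqre (W h) (W g)) (hre_shift h g),
      hLshift (seqim h g) (seqim (W h) (W g)) (him_shift h g)]
  refine ⟨?_, ?_, ?_, ?_, ?_, ?_, ?_, hinv, ?_⟩
  · intro h g
    rw [hB, hB, hre_symm, him_symm, map_neg]
    simp [Complex.ext_iff]
  · intro h₁ h₂ g
    rw [hB, hB, hB, hre_add₁, him_add₁, map_add, map_add]
    push_cast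
    ring
  · intro h g₁ g₂
    rw [hB, hB, hB, hre_add₂, him_add₂, map_add, map_add]
    push_cast
    ring
  · intro a h g
    rw [hB, hB, hre_smul₁, him_smul₁, map_add, map_sub, map_smul, map_smul,
      map_smul]
    simp [Complex.ext_iff, Complex.mul_re, Complex.mul_im] <;> ring
  · intro a h g
    rw [hB, hB, hre_smul₂, him_smul₂, map_sub, map_add, map_smul, map_smul,
      map_smul]
    simp [Complex.ext_iff, Complex.mul_re, Complex.mul_im] <;> ring
  · intro h
    have him0 : seqim h h = 0 := by
      ext n
      simp only [BoundedContinuousFunction.coe_zero, Pi.zero_apply]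
      rw [him, ← RCLike.im_to_complex]
      exact inner_self_im _
    have hre0 : ∀ n, 0 ≤ seqre h h n := by
      intro n
      rw [hre, ← RCLike.re_to_complex]
      exact inner_self_nonneg
    rw [hB, him0, map_zero]
    simpa using hLpos _ hre0
  · set C' : ℝ := max Cpb 0 with hC'
    refine ⟨2 * C' ^ 2, fun h g => ?_⟩
    have hbd : ∀ (x y : H) (n : ℕ), ‖(W ^ n) x‖ ≤ C' * ‖x‖ := by
      intro x y n
      calc ‖(W ^ n) x‖ ≤ ‖W ^ n‖ * ‖x‖ := (W ^ n).le_opNorm x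
        _ ≤ C' * ‖x‖ := by
            apply mul_le_mul_of_nonneg_right _ (norm_nonneg x)
            exact le_trans (hpb n) (le_max_left _ _)
    have hseq : ∀ (f : ℕ →ᵇ ℝ), (∀ n, |f n| ≤ C' * ‖h‖ * (C' * ‖g‖)) →
        ‖f‖ ≤ C' * ‖h‖ * (C' * ‖g‖) := by
      intro f hf
      apply BoundedContinuousFunction.norm_le (mul_nonneg (mul_nonneg (le_max_right _ _) (norm_nonneg _)) (mul_nonneg (le_max_right _ _) (norm_nonneg _))) |>.mpr
      intro n
      simpa using hf n
    have key : ∀ n, ‖⟪(W ^ n) h, (W ^ n) g⟫_ℂ‖ ≤ C' * ‖h‖ * (C' * ‖g‖) := by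
      intro n
      calc ‖⟪(W ^ n) h, (W ^ n) g⟫_ℂ‖ ≤ ‖(W ^ n) h‖ * ‖(W ^ n) g‖ :=
            by exact norm_inner_le_norm _ _
        _ ≤ C' * ‖h‖ * (C' * ‖g‖) := by
            apply mul_le_mul (hbd h g n) (hbd g h n) (norm_nonneg _)
            exact mul_nonneg (le_max_right _ _) (norm_nonneg _)
    have hnre : ‖seqre h g‖ ≤ C' * ‖h‖ * (C' * ‖g‖) := by
      apply hseq; intro n; rw [hre]
      exact le_trans (Complex.abs_re_le_norm _) (key n)
    have hnim : ‖seqim h g‖ ≤ C' * ‖h‖ * (C' * ‖g‖) := by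
      apply hseq; intro n; rw [him]
      exact le_trans (Complex.abs_im_le_norm _) (key n)
    rw [hB]
    calc ‖(L (seqre h g) : ℂ) + (L (seqim h g) : ℂ) * Complex.I‖
        ≤ ‖(L (seqre h g) : ℂ)‖
          + ‖(L (seqim h g) : ℂ) * Complex.I‖ := norm_add_le _ _
      _ = |L (seqre h g)| + |L (seqim h g)| := by simp
      _ ≤ C' * ‖h‖ * (C' * ‖g‖) + C' * ‖h‖ * (C' * ‖g‖) := by
          have := le_trans (hLabs (seqre h g)) hnre
          have := le_trans (hLabs (seqim h g)) hnim
          linarith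
      _ = 2 * C' ^ 2 * ‖h‖ * ‖g‖ := by ring
  · intro h _
    rw [hinv]
    assumption
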